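/- Let S = ∑_{k=0}^∞ ln(1 + 2⁻ᵏ) and suppose 0 ≤ x < S. Then for every n ≥ 0 the residual of the exponential recurrence satisfies L_{n+1} < 2·ln(1 + 2⁻ⁿ). -/

import Mathlib

/-- Restoring shift-and-add recurrence for computing `exp x`:
`(expRec x n).1 = Lₙ` (residual) and `(expRec x n).2 = Eₙ` (partial product),
with `L₀ = x`, `E₀ = 1`, `dₙ = 1` iff `Lₙ ≥ ln (1 + 2⁻ⁿ)`,
`Lₙ₊₁ = Lₙ - ln (1 + dₙ 2⁻ⁿ)`, `Eₙ₊₁ = Eₙ (1 + dₙ 2⁻ⁿ)`. -/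
noncomputable def expRec (x : ℝ) : ℕ → ℝ × ℝ
  | 0 => (x, 1)
  | n + 1 =>
    let p := expRec x n
    if Real.log (1 + (2 : ℝ) ^ (-(n : ℤ))) ≤ p.1 then
      (p.1 - Real.log (1 + (2 : ℝ) ^ (-(n : ℤ))), p.2 * (1 + (2 : ℝ) ^ (-(n : ℤ))))
    else p

namespace ExpRecAux

noncomputable def f (k : ℕ) : ℝ := Real.log (1 + (2 : ℝ) ^ (-(k : ℤ)))

lemma two_zpow_pos (k : ℕ) : (0 : ℝ) < (2 : ℝ) ^ (-(k : ℤ)) := by positivity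

lemma two_zpow_eq (k : ℕ) : (2 : ℝ) ^ (-(k : ℤ)) = (1 / 2 : ℝ) ^ k := by
  rw [zpow_neg, zpow_natCast, one_div, inv_pow]

lemma two_zpow_le_one (k : ℕ) : (2 : ℝ) ^ (-(k : ℤ)) ≤ 1 := by
  rw [two_zpow_eq]
  exact pow_le_one₀ (by norm_num) (by norm_num)

lemma f_pos (k : ℕ) : 0 < f k :=
  Real.log_pos (by linarith [two_zpow_pos k])

lemma f_le (k : ℕ) : f k ≤ (2 : ℝ) ^ (-(k : ℤ)) := by
  have := Real.log_le_sub_one_of_pos (x := 1 + (2 : ℝ) ^ (-(k : ℤ)))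
    (by linarith [two_zpow_pos k])
  simpa [f] using this

lemma half_le_f (k : ℕ) : (2 : ℝ) ^ (-(k : ℤ)) / 2 ≤ f k := by
  set t := (2 : ℝ) ^ (-(k : ℤ)) with ht
  have htpos := two_zpow_pos k
  have ht1 := two_zpow_le_one k
  have h := Real.one_sub_inv_le_log_of_pos (x := 1 + t) (by linarith)
  have heq : 1 - (1 + t)⁻¹ = t / (1 + t) := by
    have h1t : 1 + t ≠ 0 := by linarith
    rw [inv_eq_one_div, eq_div_iff h1t, sub_mul, one_div_mul_cancel h1t]; ring
  have h2 : t / 2 ≤ t / (1 + t) :=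
    div_le_div_of_nonneg_left htpos.le (by linarith) (by linarith)
  rw [heq] at h
  exact h2.trans h

lemma summable_f : Summable f := by
  apply Summable.of_nonneg_of_le (fun k => (f_pos k).le) f_le
  simpa only [two_zpow_eq] using summable_geometric_of_lt_one (by norm_num) (by norm_num)

lemma summable_f_add (n : ℕ) : Summable (fun k => f (k + n)) :=
  (summable_nat_add_iff n).mpr summable_f

noncomputable def T (n : ℕ) : ℝ := ∑' k : ℕ, f (k + n)

lemma T_eq (n : ℕ) : T n = f n + T (n + 1) := by
  have h := (summable_f_add n).tsum_eq_zero_add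
  simp only [T]
  rw [h, zero_add]
  congr 1
  · exact tsum_congr fun k => by ring_nf

/-- Weierstrass product inequality for our geometric terms. -/
lemma one_add_sum_le_prod (m : ℕ) (a : ℕ → ℝ) (ha : ∀ k, 0 ≤ a k) :
    1 + ∑ k ∈ Finset.range m, a k ≤ ∏ k ∈ Finset.range m, (1 + a k) := by
  induction m with
  | zero => simp
  | succ m ih =>
    rw [Finset.sum_range_succ, Finset.prod_range_succ]
    have hs : 0 ≤ ∑ k ∈ Finset.range m, a k := Finset.sum_nonneg fun k _ => ha k
    nlinarith [ha m, mul_le_mul_of_nonneg_right ih (by linarith [ha m] : (0:ℝ) ≤ 1 + a m)]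

lemma f_le_T_succ (n : ℕ) : f n ≤ T (n + 1) := by
  -- T (n+1) ≥ log (1 + 2^{-n} (1 - (1/2)^m)) for every m; take the limit.
  have key : ∀ m : ℕ,
      Real.log (1 + (2 : ℝ) ^ (-(n : ℤ)) * (1 - (1/2 : ℝ) ^ m)) ≤ T (n + 1) := by
    intro m
    have hsum : ∑ k ∈ Finset.range m, (2 : ℝ) ^ (-((k + (n+1) : ℕ) : ℤ))
        = (2 : ℝ) ^ (-(n : ℤ)) * (1 - (1/2 : ℝ) ^ m) := by
      have : ∀ k : ℕ, (2 : ℝ) ^ (-((k + (n+1) : ℕ) : ℤ)) = (1/2 : ℝ) ^ (n+1) * (1/2:ℝ) ^ k := by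
        intro k
        rw [two_zpow_eq, pow_add, mul_comm]
      simp only [this]
      rw [← Finset.mul_sum, geom_sum_eq (by norm_num)]
      rw [two_zpow_eq]
      field_simp
      ring
    have h1 : 1 + (2 : ℝ) ^ (-(n : ℤ)) * (1 - (1/2 : ℝ) ^ m)
        ≤ ∏ k ∈ Finset.range m, (1 + (2 : ℝ) ^ (-((k + (n+1) : ℕ) : ℤ))) := by
      rw [← hsum]
      exact one_add_sum_le_prod m _ fun k => (two_zpow_pos _).le
    have h2 : Real.log (∏ k ∈ Finset.range m, (1 + (2 : ℝ) ^ (-((k + (n+1) : ℕ) : ℤ))))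
        = ∑ k ∈ Finset.range m, f (k + (n+1)) := by
      rw [Real.log_prod]
      · rfl
      · intro k _; positivity
    have h3 : ∑ k ∈ Finset.range m, f (k + (n+1)) ≤ T (n + 1) :=
      (summable_f_add (n+1)).sum_le_tsum _ (fun k _ => (f_pos _).le)
    calc Real.log (1 + (2 : ℝ) ^ (-(n : ℤ)) * (1 - (1/2 : ℝ) ^ m))
        ≤ Real.log (∏ k ∈ Finset.range m, (1 + (2 : ℝ) ^ (-((k + (n+1) : ℕ) : ℤ)))) := by
          apply Real.log_le_log
          · have hp := two_zpow_pos n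
            have : (1/2 : ℝ) ^ m ≤ 1 := pow_le_one₀ (by norm_num) (by norm_num)
            nlinarith
          · exact h1
      _ = ∑ k ∈ Finset.range m, f (k + (n+1)) := h2
      _ ≤ T (n + 1) := h3
  -- limit
  have hT : Filter.Tendsto
      (fun m => Real.log (1 + (2 : ℝ) ^ (-(n : ℤ)) * (1 - (1/2 : ℝ) ^ m)))
      Filter.atTop (nhds (f n)) := by
    have h0 : Filter.Tendsto (fun m : ℕ => (1/2 : ℝ) ^ m) Filter.atTop (nhds 0) :=
      tendsto_pow_atTop_nhds_zero_of_lt_one (by norm_num) (by norm_num)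
    have harg : Filter.Tendsto
        (fun m : ℕ => 1 + (2 : ℝ) ^ (-(n : ℤ)) * (1 - (1/2 : ℝ) ^ m))
        Filter.atTop (nhds (1 + (2 : ℝ) ^ (-(n : ℤ)))) := by
      have h1 : Filter.Tendsto (fun m : ℕ => (1 : ℝ) - (1/2 : ℝ) ^ m)
          Filter.atTop (nhds (1 - 0)) := tendsto_const_nhds.sub h0
      have h2 := h1.const_mul ((2 : ℝ) ^ (-(n : ℤ)))
      have h3 := (tendsto_const_nhds (x := (1 : ℝ))).add h2
      simpa using h3
    have hcont : ContinuousAt Real.log (1 + (2 : ℝ) ^ (-(n : ℤ))) :=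
      Real.continuousAt_log (by linarith [two_zpow_pos n])
    exact hcont.tendsto.comp harg
  exact le_of_tendsto hT (Filter.Eventually.of_forall key)

end ExpRecAux

open ExpRecAux in
/-- If `0 ≤ x < S = ∑_{k=0}^∞ ln (1 + 2⁻ᵏ)`, then for every `n`,
`L_{n+1} < 2 ln (1 + 2⁻ⁿ)`. -/
theorem expRec_residual_step_bound (x : ℝ)
    (hx0 : 0 ≤ x) (hxS : x < ∑' k : ℕ, Real.log (1 + (2 : ℝ) ^ (-(k : ℤ)))) (n : ℕ) :
    (expRec x (n + 1)).1 < 2 * Real.log (1 + (2 : ℝ) ^ (-(n : ℤ))) := by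
  have inv : ∀ m : ℕ, (expRec x m).1 < T m := by
    intro m
    induction m with
    | zero =>
      have : T 0 = ∑' k : ℕ, Real.log (1 + (2 : ℝ) ^ (-(k : ℤ))) := by
        simp [T, f]
      rw [this]
      exact hxS
    | succ m ih =>
      rw [expRec]
      split_ifs with h
      · have := T_eq m
        simp only [f] at this
        simp only []
        linarith
      · push_neg at h
        have h2 : f m ≤ T (m + 1) := f_le_T_succ m
        simp only [f] at h2
        linarith
  -- final bound: T (n+1) ≤ 2^{-n} ≤ 2 * f n
  have hTle : T (n + 1) ≤ (2 : ℝ) ^ (-(n : ℤ)) := by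
    have hle : ∀ k : ℕ, f (k + (n+1)) ≤ (1/2 : ℝ) ^ (n+1) * (1/2 : ℝ) ^ k := by
      intro k
      have := f_le (k + (n+1))
      rwa [two_zpow_eq, pow_add, mul_comm ((1/2:ℝ)^k)] at this
    have hsum : Summable (fun k : ℕ => (1/2 : ℝ) ^ (n+1) * (1/2 : ℝ) ^ k) :=
      (summable_geometric_of_lt_one (by norm_num) (by norm_num)).mul_left _
    calc T (n + 1) ≤ ∑' k : ℕ, (1/2 : ℝ) ^ (n+1) * (1/2 : ℝ) ^ k :=
          (summable_f_add (n+1)).tsum_le_tsum hle hsum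
      _ = (1/2 : ℝ) ^ (n+1) * (1 - 1/2)⁻¹ := by
          rw [tsum_mul_left, tsum_geometric_of_lt_one (by norm_num) (by norm_num)]
      _ = (2 : ℝ) ^ (-(n : ℤ)) := by
          rw [two_zpow_eq]
          field_simp
          ring
  have h2f : (2 : ℝ) ^ (-(n : ℤ)) ≤ 2 * Real.log (1 + (2 : ℝ) ^ (-(n : ℤ))) := by
    have := half_le_f n
    simp only [f] at this
    linarith
  have := inv (n + 1)
  calc (expRec x (n + 1)).1 < T (n + 1) := this
    _ ≤ (2 : ℝ) ^ (-(n : ℤ)) := hTle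
    _ ≤ 2 * Real.log (1 + (2 : ℝ) ^ (-(n : ℤ))) := h2f
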